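/- Let t_k = ((1/2)_k/(1)_k)^4 and let m be a positive odd integer with μ = (m-1)/2. Then there exist an integer c and a polynomial x ∈ ℤ[k] such that for all integers k ≥ 0: μ! · (4k+1)^m t_k = c·(4k+1) t_k + Δ_k( 32 k^4 x(4k) t_k ), where Δ_k f(k) = f(k+1) - f(k). -/

import Mathlib

open Polynomial

noncomputable def Dap (w : Polynomial ℤ) : Polynomial ℤ :=
  (X+1)^4 * w.comp (X+2) - (X-1)^4 * w.comp (X-2)

noncomputable def EE : ℕ → Polynomial ℤ
  | 0 => X^3 + X
  | (j+1) => (X+2)^2 * EE j + X*(X-1)^4*(X-2)^(2*j)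

lemma hE8 : ∀ j, (8 : Polynomial ℤ) * EE j = Dap (X^(2*j)) := by
  intro j
  induction j with
  | zero => simp [Dap, EE]; ring
  | succ j ih =>
      have h : Dap (X^(2*(j+1))) = (X+2)^2 * Dap (X^(2*j)) + 8*(X*(X-1)^4*(X-2)^(2*j)) := by
        simp only [Dap, X_pow_comp]
        ring
      rw [h, ← ih, EE]; ring

def Rep16 (T : Polynomial ℤ) : Prop :=
  ∃ c : ℤ, ∃ w : Polynomial ℤ, T = C (8*c) * X + Dap w

lemma Rep16.add {T U : Polynomial ℤ} (hT : Rep16 T) (hU : Rep16 U) : Rep16 (T + U) := by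
  obtain ⟨c, w, hw⟩ := hT
  obtain ⟨d, v, hv⟩ := hU
  refine ⟨c + d, w + v, ?_⟩
  rw [hw, hv]
  simp only [Dap, add_comp, map_add, map_mul]
  ring

lemma Rep16.Cmul (a : ℤ) {T : Polynomial ℤ} (hT : Rep16 T) : Rep16 (C a * T) := by
  obtain ⟨c, w, hw⟩ := hT
  refine ⟨a * c, C a * w, ?_⟩
  rw [hw]
  simp only [Dap, mul_comp, C_comp, map_mul]
  ring

lemma Rep16_Dap (w : Polynomial ℤ) : Rep16 (Dap w) := ⟨0, w, by simp⟩

lemma coeff_comp_negX (p : Polynomial ℤ) (n : ℕ) :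
    (p.comp (-X)).coeff n = (-1)^n * p.coeff n := by
  induction p using Polynomial.induction_on' with
  | add p q hp hq => simp [add_comp, hp, hq, mul_add]
  | monomial k a =>
      rw [← C_mul_X_pow_eq_monomial]
      have h : (C a * X ^ k).comp (-X) = C ((-1)^k * a) * X ^ k := by
        rw [mul_comp, C_comp, pow_comp, X_comp, map_mul, map_pow, map_neg, map_one]
        ring
      rw [h, coeff_C_mul, coeff_C_mul, coeff_X_pow]
      rcases eq_or_ne k n with h | h
      · subst h; ring
      · simp [Ne.symm h]

lemma odd_coeff_even {p : Polynomial ℤ} (h : p.comp (-X) = -p) {n : ℕ} (hn : Even n) :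
    p.coeff n = 0 := by
  have h2 := coeff_comp_negX p n
  rw [h, hn.neg_one_pow, one_mul, coeff_neg] at h2
  linarith

lemma monic_M (j : ℕ) : (X*(X-1)^4*(X-2)^(2*j) : Polynomial ℤ).Monic := by
  have h1 : ((X - 1 : Polynomial ℤ)) = X - C 1 := by norm_num
  have h2 : ((X - 2 : Polynomial ℤ)) = X - C 2 := by norm_num
  rw [h1, h2]
  exact (monic_X.mul ((monic_X_sub_C 1).pow 4)).mul ((monic_X_sub_C 2).pow (2*j))

lemma natDegree_M (j : ℕ) : (X*(X-1)^4*(X-2)^(2*j) : Polynomial ℤ).natDegree = 2*j+5 := by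
  have h1 : ((X - 1 : Polynomial ℤ)) = X - C 1 := by norm_num
  have h2 : ((X - 2 : Polynomial ℤ)) = X - C 2 := by norm_num
  rw [h1, h2, Monic.natDegree_mul (by exact monic_X.mul ((monic_X_sub_C 1).pow 4))
    ((monic_X_sub_C 2).pow (2*j)), Monic.natDegree_mul monic_X ((monic_X_sub_C 1).pow 4),
    Monic.natDegree_pow, Monic.natDegree_pow]
  · rw [natDegree_X_sub_C, natDegree_X_sub_C, natDegree_X]; ring
  · exact monic_X_sub_C 2
  · exact monic_X_sub_C 1

lemma natDegree_EE (j : ℕ) : (EE j).natDegree ≤ 2*j+3 := by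
  induction j with
  | zero =>
      apply le_trans (natDegree_add_le _ _)
      simp [natDegree_X_pow]
  | succ j ih =>
      rw [EE]
      apply le_trans (natDegree_add_le _ _)
      apply max_le
      · apply le_trans (natDegree_mul_le)
        have h : ((X+2:Polynomial ℤ)^2).natDegree ≤ 2 := by
          apply le_trans (natDegree_pow_le)
          have : ((X+2:Polynomial ℤ)).natDegree ≤ 1 := by
            apply le_trans (natDegree_add_le _ _); simp
          omega
        omega
      · rw [natDegree_M]; omega

lemma coeff_EE_top (j : ℕ) : (EE j).coeff (2*j+3) = j+1 := by
  induction j with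
  | zero => simp [EE, coeff_X]
  | succ j ih =>
      have hsplit : EE (j+1) = EE j * X^2 + (EE j * X) * C 4 + EE j * C 4
          + X*(X-1)^4*(X-2)^(2*j) := by
        rw [EE, show (C 4 : Polynomial ℤ) = 4 from by norm_num]; ring
      have h2 : 2*(j+1)+3 = (2*j+3) + 2 := by ring
      rw [hsplit, h2]
      rw [coeff_add, coeff_add, coeff_add]
      rw [show (2*j+3)+2 = (2*j+4)+1 from rfl]
      rw [coeff_mul_C, coeff_mul_C, coeff_mul_X]
      rw [show (2*j+4)+1 = (2*j+3)+2 from rfl, coeff_mul_X_pow]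
      have hd1 : (EE j).coeff (2*j+4) = 0 :=
        coeff_eq_zero_of_natDegree_lt (lt_of_le_of_lt (natDegree_EE j) (by omega))
      have hd2 : (EE j).coeff ((2*j+3)+2) = 0 :=
        coeff_eq_zero_of_natDegree_lt (lt_of_le_of_lt (natDegree_EE j) (by omega))
      have hM : (X*(X-1)^4*(X-2)^(2*j) : Polynomial ℤ).coeff ((2*j+3)+2) = 1 := by
        have h := (monic_M j).coeff_natDegree
        rwa [natDegree_M, show 2*j+5 = (2*j+3)+2 from by ring] at h
      rw [ih, hd1, hd2, hM]
      push_cast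
      ring

lemma EE_odd (j : ℕ) : (EE j).comp (-X) = -(EE j) := by
  have h8 : (8 : Polynomial ℤ) ≠ 0 := by
    intro h
    have := congrArg (eval 0) h
    norm_num at this
  apply mul_left_cancel₀ h8
  have hcomp : (8 : Polynomial ℤ) * (EE j).comp (-X) = ((8 : Polynomial ℤ) * EE j).comp (-X) := by
    rw [mul_comp]
    norm_num
  rw [hcomp, hE8 j]
  have h : (Dap (X^(2*j))).comp (-X) = -(Dap (X^(2*j))) := by
    have c2 : ((2:Polynomial ℤ)).comp (-X) = 2 := by
      rw [show (2:Polynomial ℤ) = C 2 from by norm_num, C_comp]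
    simp only [Dap, sub_comp, mul_comp, pow_comp, add_comp, X_comp, one_comp, X_pow_comp, c2]
    have e1 : (-X + 1 : Polynomial ℤ)^4 = (X - 1)^4 := by ring
    have e2 : (-X - 1 : Polynomial ℤ)^4 = (X + 1)^4 := by ring
    have e3 : (-X + 2 : Polynomial ℤ)^(2*j) = (X - 2)^(2*j) := by
      rw [show (-X + 2 : Polynomial ℤ) = -(X - 2) from by ring]
      exact (even_two_mul j).neg_pow _
    have e4 : (-X - 2 : Polynomial ℤ)^(2*j) = (X + 2)^(2*j) := by
      rw [show (-X - 2 : Polynomial ℤ) = -(X + 2) from by ring]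
      exact (even_two_mul j).neg_pow _
    rw [e1, e2, e3, e4]; ring
  rw [h, ← hE8 j]
  ring

lemma main_S : ∀ N : ℕ, ∀ T : Polynomial ℤ, T.comp (-X) = -T → T.natDegree ≤ 2*N+1 →
    (∀ i, i ≤ N → (8 * (Nat.factorial i) : ℤ) ∣ T.coeff (2*i+1)) → Rep16 T := by
  intro N
  induction N with
  | zero =>
      intro T hodd hdeg hdiv
      obtain ⟨c, hc⟩ := hdiv 0 le_rfl
      refine ⟨c, 0, ?_⟩
      have hD : Dap 0 = 0 := by simp [Dap]
      rw [hD, add_zero]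
      ext n
      match n with
      | 0 => rw [odd_coeff_even hodd Even.zero]; simp
      | 1 =>
          rw [coeff_C_mul, coeff_X_one, mul_one]
          simpa using hc
      | (n+2) =>
          rw [coeff_eq_zero_of_natDegree_lt (lt_of_le_of_lt hdeg (by omega))]
          rw [coeff_C_mul, coeff_X]
          simp
  | succ N ih =>
      intro T hodd hdeg hdiv
      obtain ⟨b, hb⟩ := hdiv (N+1) le_rfl
      set T' : Polynomial ℤ := T - C (T.coeff (2*(N+1)+1)) * X^(2*(N+1)+1) with hT'
      have hxodd : ((X : Polynomial ℤ)^(2*(N+1)+1)).comp (-X) = -(X^(2*(N+1)+1)) := by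
        rw [X_pow_comp]
        exact Odd.neg_pow ⟨N+1, by ring⟩ X
      have hT'odd : T'.comp (-X) = -T' := by
        rw [hT', sub_comp, mul_comp, C_comp, hxodd, hodd]
        ring
      have hT'deg : T'.natDegree ≤ 2*N+1 := by
        rw [natDegree_le_iff_coeff_eq_zero]
        intro mm hmm
        rcases Nat.even_or_odd mm with he | ho
        · exact odd_coeff_even hT'odd he
        · rw [hT', coeff_sub, coeff_C_mul, coeff_X_pow]
          rcases eq_or_ne mm (2*(N+1)+1) with h | h
          · subst h; simp
          · have hz : T.coeff mm = 0 := by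
              apply coeff_eq_zero_of_natDegree_lt
              apply lt_of_le_of_lt hdeg
              obtain ⟨r, hr⟩ := ho
              omega
            simp [hz, h]
      have hT'div : ∀ i, i ≤ N → (8 * (Nat.factorial i) : ℤ) ∣ T'.coeff (2*i+1) := by
        intro i hi
        rw [hT', coeff_sub, coeff_C_mul, coeff_X_pow]
        have : ¬ (2*i+1 = 2*(N+1)+1) := by omega
        simp only [this, if_false, mul_zero, sub_zero]
        exact hdiv i (by omega)
      have repT' : Rep16 T' := ih T' hT'odd hT'deg hT'div
      -- Rep16 of the leading block
      have repP : Rep16 (C (8 * ((N+1).factorial : ℤ)) * X^(2*(N+1)+1)) := by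
        have key : C (8 * (((N+1).factorial : ℤ))) * X^(2*(N+1)+1)
            = Dap (C ((N.factorial : ℤ)) * X^(2*N))
              + C (8 * ((N.factorial : ℤ))) * (C ((N:ℤ)+1) * X^(2*N+3) - EE N) := by
          have hDap : Dap (C ((N.factorial : ℤ)) * X^(2*N))
              = C ((N.factorial : ℤ)) * ((8:Polynomial ℤ) * EE N) := by
            have hlin : Dap (C ((N.factorial : ℤ)) * X^(2*N))
                = C ((N.factorial : ℤ)) * Dap (X^(2*N)) := by
              simp only [Dap, mul_comp, C_comp]
              ring
            rw [hlin, ← hE8 N]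
          rw [hDap]
          have hfac : (((N+1).factorial : ℤ)) = ((N:ℤ)+1) * (N.factorial : ℤ) := by
            rw [Nat.factorial_succ]; push_cast; ring
          rw [hfac, map_mul, map_mul, map_mul,
            show (C (8:ℤ) : Polynomial ℤ) = 8 from by norm_num]
          ring
        rw [key]
        apply Rep16.add (Rep16_Dap _)
        -- second piece: apply ih
        apply ih
        · -- odd
          have hU : ((C ((N:ℤ)+1) * X^(2*N+3) - EE N)).comp (-X)
              = -(C ((N:ℤ)+1) * X^(2*N+3) - EE N) := by
            rw [sub_comp, mul_comp, C_comp, X_pow_comp, EE_odd,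
              show ((-X : Polynomial ℤ))^(2*N+3) = -(X^(2*N+3)) from
                Odd.neg_pow ⟨N+1, by ring⟩ X]
            ring
          rw [mul_comp, C_comp, hU]
          ring
        · -- degree
          apply le_trans (natDegree_C_mul_le _ _)
          rw [natDegree_le_iff_coeff_eq_zero]
          intro mm hmm
          rw [coeff_sub, coeff_C_mul, coeff_X_pow]
          rcases eq_or_ne mm (2*N+3) with h | h
          · subst h
            rw [coeff_EE_top]
            simp
          · have hz : (EE N).coeff mm = 0 := by
              rcases lt_or_ge (2*N+3) mm with hlt | hle
              · exact coeff_eq_zero_of_natDegree_lt (lt_of_le_of_lt (natDegree_EE N) hlt)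
              · -- mm ≤ 2N+3, mm > 2N+1, mm ≠ 2N+3 ⇒ mm = 2N+2 even
                have : mm = 2*N+2 := by omega
                subst this
                have hEodd := EE_odd N
                exact odd_coeff_even hEodd ⟨N+1, by ring⟩
            simp [hz, h]
        · -- divisibility
          intro i hi
          rw [coeff_C_mul]
          exact Dvd.dvd.mul_right (mul_dvd_mul_left 8
            (Int.natCast_dvd_natCast.mpr (Nat.factorial_dvd_factorial hi))) _
      -- combine
      have hdecomp : T = T' + C b * (C (8 * ((N+1).factorial : ℤ)) * X^(2*(N+1)+1)) := by
        rw [hT', hb, map_mul, map_mul]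
        ring
      rw [hdecomp]
      exact repT'.add (Rep16.Cmul b repP)


/-- for t_k = ((1/2)_k/(1)_k)^4 and odd positive m with μ = (m-1)/2,
there are an integer c and x ∈ ℤ[k] with
μ!·(4k+1)^m t_k = c(4k+1) t_k + Δ_k(32 k^4 x(4k) t_k). -/
theorem stmt16 (m : ℕ) (hm : Odd m) (hm0 : 0 < m) (μ : ℕ) (hμ : μ = (m - 1) / 2)
    (t : ℕ → ℚ)
    (ht : ∀ k : ℕ, t k =
      ((∏ i ∈ Finset.range k, ((1 : ℚ) / 2 + i)) / (Nat.factorial k)) ^ 4) :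
    ∃ (c : ℤ) (x : Polynomial ℤ), ∀ k : ℕ,
      (Nat.factorial μ : ℚ) * (4 * (k : ℚ) + 1) ^ m * t k
        = (c : ℚ) * (4 * (k : ℚ) + 1) * t k
          + (32 * ((k : ℚ) + 1) ^ 4 * ((x.eval (4 * ((k : ℤ) + 1)) : ℤ) : ℚ) * t (k + 1)
            - 32 * (k : ℚ) ^ 4 * ((x.eval (4 * (k : ℤ)) : ℤ) : ℚ) * t k) := by
  obtain ⟨r, hr⟩ := hm
  have hmμ : m = 2*μ+1 := by omega
  have hrep : Rep16 (C (8 * (Nat.factorial μ : ℤ)) * X^(2*μ+1)) := by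
    apply main_S μ
    · rw [mul_comp, C_comp, X_pow_comp, Odd.neg_pow ⟨μ, by ring⟩]
      ring
    · apply le_trans (natDegree_C_mul_le _ _)
      simp [natDegree_X_pow]
    · intro i hi
      rw [coeff_C_mul, coeff_X_pow]
      rcases eq_or_ne (2*i+1) (2*μ+1) with h | h
      · have hiμ : i = μ := by omega
        subst hiμ
        simp
      · simp [Ne.symm h, h, show i ≠ μ by omega]
  obtain ⟨c, w, hw⟩ := hrep
  refine ⟨c, w.comp (X - C 1), ?_⟩
  intro k
  have hev := congrArg (eval ((4*(k:ℤ)+1))) hw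
  simp only [Dap, eval_mul, eval_add, eval_sub, eval_pow, eval_comp, eval_C, eval_X,
    eval_one, eval_ofNat] at hev
  have hx1 : (w.comp (X - C 1)).eval (4*((k:ℤ)+1)) = w.eval (4*(k:ℤ)+1+2) := by
    rw [eval_comp, eval_sub, eval_X, eval_C]
    exact congrArg w.eval (by ring)
  have hx0 : (w.comp (X - C 1)).eval (4*(k:ℤ)) = w.eval (4*(k:ℤ)+1-2) := by
    rw [eval_comp, eval_sub, eval_X, eval_C]
    exact congrArg w.eval (by ring)
  have hZ : 8 * (μ.factorial:ℤ) * (4*(k:ℤ)+1)^(2*μ+1)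
      = 8*c*(4*(k:ℤ)+1) + ((4*(k:ℤ)+2)^4 * (w.comp (X - C 1)).eval (4*((k:ℤ)+1))
          - (4*(k:ℤ))^4 * (w.comp (X - C 1)).eval (4*(k:ℤ))) := by
    rw [hx1, hx0]
    linear_combination hev
  have keyQ : (8:ℚ) * (μ.factorial:ℚ) * (4*(k:ℚ)+1)^(2*μ+1)
      = 8*(c:ℚ)*(4*(k:ℚ)+1)
        + ((4*(k:ℚ)+2)^4 * (((w.comp (X - C 1)).eval (4*((k:ℤ)+1)) : ℤ) : ℚ)
          - (4*(k:ℚ))^4 * (((w.comp (X - C 1)).eval (4*(k:ℤ)) : ℤ) : ℚ)) := by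
    exact_mod_cast congrArg (fun z : ℤ => (z : ℚ)) hZ
  -- ratio fact
  have hF : ((Nat.factorial k : ℚ)) ≠ 0 := by
    exact_mod_cast Nat.factorial_ne_zero k
  have hk1 : ((k:ℚ)+1) ≠ 0 := by positivity
  have ratio : 16*((k:ℚ)+1)^4 * t (k+1) = (2*(k:ℚ)+1)^4 * t k := by
    rw [ht (k+1), ht k, Finset.prod_range_succ, Nat.factorial_succ]
    push_cast
    field_simp
    ring
  rw [hmμ]
  linear_combination (t k / 8) * keyQ
    - 2 * (((w.comp (X - C 1)).eval (4*((k:ℤ)+1)) : ℤ) : ℚ) * ratio
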